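/- Let L be the averaging operator on the m-regular tree with parameter 0 ≤ β < 1: L(u)(x) = u(x) - β u(x̂) - (1-β)·(1/m)∑_{y∈S^1(x)} u(y) for x ≠ ∅, and L(u)(∅) = u(∅) - (1/m)∑_{y∈S^1(∅)} u(y). If u satisfies L(u)(x) = h(x) for all x ∈ T, then for every x ≠ ∅ and every i ≥ 1, (β/(1-β))^i·(u(x)-u(x̂)) = m^{-i} ∑_{y∈S^i(x)} (u(y)-u(ŷ)) + (1/β)∑_{j=0}^{i-1} (β/(1-β))^{i-j} m^{-j} ∑_{y∈S^j(x)} h(y), provided β > 0. -/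

import Mathlib

/-- The averaging operator on the `m`-regular tree with parameter `β`. -/
noncomputable def Lop (m : ℕ) (β : ℝ) (u : List (Fin m) → ℝ) (x : List (Fin m)) : ℝ :=
  if x = [] then u [] - (1 / m) * ∑ i : Fin m, u [i]
  else u x - β * u x.dropLast - ((1 - β) / m) * ∑ i : Fin m, u (x ++ [i])

private lemma sum_pi_succ {m n : ℕ} (f : (Fin (n+1) → Fin m) → ℝ) :
    ∑ t : Fin (n+1) → Fin m, f t
      = ∑ c : Fin m, ∑ t : Fin n → Fin m, f (Fin.cons c t) := by
  rw [← (Fin.consEquiv (fun _ : Fin (n+1) => Fin m)).sum_comp f, Fintype.sum_prod_type]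
  rfl

private lemma ofFn_cons {m n : ℕ} (c : Fin m) (t : Fin n → Fin m) :
    List.ofFn (Fin.cons c t : Fin (n+1) → Fin m) = c :: List.ofFn t := by
  rw [List.ofFn_succ]; simp

private lemma step_rel (m : ℕ) (hm : 2 ≤ m) (β : ℝ) (hβ1 : β < 1)
    (u h : List (Fin m) → ℝ) (heq : ∀ x, Lop m β u x = h x)
    (x : List (Fin m)) (hx : x ≠ []) :
    (β / (1 - β)) * (u x - u x.dropLast)
      = (m : ℝ)⁻¹ * ∑ c : Fin m, (u (x ++ [c]) - u ((x ++ [c]).dropLast))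
        + (1 / (1 - β)) * h x := by
  have hm0 : (m : ℝ) ≠ 0 := by positivity
  have hb : (1 : ℝ) - β ≠ 0 := by linarith
  have E := heq x
  rw [Lop, if_neg hx] at E
  have key : ∑ c : Fin m, (u (x ++ [c]) - u ((x ++ [c]).dropLast))
      = (∑ c : Fin m, u (x ++ [c])) - m * u x := by
    simp [Finset.sum_sub_distrib, List.dropLast_concat, mul_comm]
  rw [key, mul_sub ((m:ℝ)⁻¹), inv_mul_cancel_left₀ hm0]
  generalize ∑ c : Fin m, u (x ++ [c]) = S at E ⊢
  have hbb : (1 - β)⁻¹ * (1 - β) = 1 := inv_mul_cancel₀ hb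
  linear_combination (1 - β)⁻¹ * E + ((m : ℝ)⁻¹ * S - u x) * hbb


/-- If `L(u) = h` on the tree then for every `x ≠ ∅` and `i ≥ 1`,
`(β/(1-β))^i (u(x)-u(x̂)) = m^{-i} ∑_{y∈S^i(x)} (u(y)-u(ŷ))
  + (1/β) ∑_{j=0}^{i-1} (β/(1-β))^{i-j} m^{-j} ∑_{y∈S^j(x)} h(y)`. -/
theorem stmt_4 (m : ℕ) (hm : 2 ≤ m) (β : ℝ) (hβ0 : 0 < β) (hβ1 : β < 1)
    (u h : List (Fin m) → ℝ) (heq : ∀ x, Lop m β u x = h x)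
    (x : List (Fin m)) (hx : x ≠ []) (i : ℕ) (hi : 1 ≤ i) :
    (β / (1 - β)) ^ i * (u x - u x.dropLast)
      = (m : ℝ)⁻¹ ^ i *
          (∑ t : Fin i → Fin m, (u (x ++ List.ofFn t) - u ((x ++ List.ofFn t).dropLast)))
        + (1 / β) * ∑ j ∈ Finset.range i,
            (β / (1 - β)) ^ (i - j) *
              ((m : ℝ)⁻¹ ^ j * ∑ t : Fin j → Fin m, h (x ++ List.ofFn t)) := by
  have hm0 : (m : ℝ) ≠ 0 := by positivity
  have hb : (1 : ℝ) - β ≠ 0 := by linarith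
  have hc : (1 / β) * (β / (1 - β)) = 1 / (1 - β) := by
    field_simp
  induction i, hi using Nat.le_induction generalizing x with
  | base =>
    have S := step_rel m hm β hβ1 u h heq x hx
    have e1 : ∑ t : Fin 1 → Fin m, (u (x ++ List.ofFn t) - u ((x ++ List.ofFn t).dropLast))
        = ∑ c : Fin m, (u (x ++ [c]) - u ((x ++ [c]).dropLast)) := by
      rw [sum_pi_succ]
      exact Finset.sum_congr rfl fun c _ => by simp [ofFn_cons]
    have e3 : ∑ t : Fin 0 → Fin m, h (x ++ List.ofFn t) = h x := by simp
    simp only [pow_one, pow_zero, one_mul, Finset.sum_range_one, Nat.sub_zero, e1, e3]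
    linear_combination S - h x * hc
  | succ i hi IH =>
    have S := step_rel m hm β hβ1 u h heq x hx
    set q : ℝ := β / (1 - β) with hq
    set a : ℝ := (m : ℝ)⁻¹ with ha
    set T : Fin m → ℝ := fun c =>
      ∑ t : Fin i → Fin m, (u ((x ++ [c]) ++ List.ofFn t) - u (((x ++ [c]) ++ List.ofFn t).dropLast)) with hT
    set H : Fin m → ℕ → ℝ := fun c j => ∑ t : Fin j → Fin m, h ((x ++ [c]) ++ List.ofFn t) with hH
    have e1 : ∑ t : Fin (i+1) → Fin m, (u (x ++ List.ofFn t) - u ((x ++ List.ofFn t).dropLast))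
        = ∑ c : Fin m, T c := by
      rw [sum_pi_succ]
      exact Finset.sum_congr rfl fun c _ =>
        Finset.sum_congr rfl fun t _ => by simp [ofFn_cons]
    have e2 : ∀ j : ℕ, ∑ t : Fin (j+1) → Fin m, h (x ++ List.ofFn t) = ∑ c : Fin m, H c j := by
      intro j
      rw [sum_pi_succ]
      exact Finset.sum_congr rfl fun c _ =>
        Finset.sum_congr rfl fun t _ => by simp [ofFn_cons]
    have e3 : ∑ t : Fin 0 → Fin m, h (x ++ List.ofFn t) = h x := by simp
    rw [e1, Finset.sum_range_succ']
    simp only [Nat.succ_sub_succ, e2, e3, pow_zero, one_mul, Nat.sub_zero]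
    -- left side via step relation and IH
    have key : q ^ (i+1) * (u x - u x.dropLast)
        = a * (∑ c : Fin m, (a ^ i * T c
            + (1 / β) * ∑ j ∈ Finset.range i, q ^ (i - j) * (a ^ j * H c j)))
          + q ^ i * ((1 / (1 - β)) * h x) := by
      have expand : ∑ c : Fin m, (q ^ i * (u (x ++ [c]) - u ((x ++ [c]).dropLast)))
          = ∑ c : Fin m, (a ^ i * T c
              + (1 / β) * ∑ j ∈ Finset.range i, q ^ (i - j) * (a ^ j * H c j)) :=
        Finset.sum_congr rfl fun c _ => IH (x ++ [c]) (by simp)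
      calc q ^ (i+1) * (u x - u x.dropLast)
          = q ^ i * (q * (u x - u x.dropLast)) := by ring
        _ = q ^ i * (a * ∑ c : Fin m, (u (x ++ [c]) - u ((x ++ [c]).dropLast))
              + (1 / (1 - β)) * h x) := by rw [S]
        _ = a * (∑ c : Fin m, q ^ i * (u (x ++ [c]) - u ((x ++ [c]).dropLast)))
              + q ^ i * ((1 / (1 - β)) * h x) := by rw [← Finset.mul_sum]; ring
        _ = _ := by rw [expand]
    rw [key]
    -- now pure algebra with sums
    have hs1 : ∑ c : Fin m, (a ^ i * T c
          + (1 / β) * ∑ j ∈ Finset.range i, q ^ (i - j) * (a ^ j * H c j))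
        = a ^ i * (∑ c : Fin m, T c)
          + (1 / β) * ∑ j ∈ Finset.range i, q ^ (i - j) * (a ^ j * ∑ c : Fin m, H c j) := by
      rw [Finset.sum_add_distrib]
      congr 1
      · rw [← Finset.mul_sum]
      · rw [← Finset.mul_sum]
        congr 1
        rw [Finset.sum_comm]
        exact Finset.sum_congr rfl fun j _ => by
          rw [← Finset.mul_sum, ← Finset.mul_sum]
    rw [hs1]
    have hs2 : ∑ j ∈ Finset.range i, q ^ (i - j) * (a ^ (j+1) * ∑ c : Fin m, H c j)
        = a * ∑ j ∈ Finset.range i, q ^ (i - j) * (a ^ j * ∑ c : Fin m, H c j) := by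
      rw [Finset.mul_sum]
      exact Finset.sum_congr rfl fun j _ => by ring
    rw [hs2]
    linear_combination (-q ^ i * h x) * hc
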